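/- Let E be an Armendariz A-module. Then E is an annihilator multiplication A-module if and only if the polynomial module E[X] is an annihilator multiplication A[X]-module. -/

import Mathlib

open Polynomial

section Aux
variable {A : Type*} [CommRing A] {E : Type*} [AddCommGroup E] [Module A E]

private lemma mem_ann_smul_top {I : Ideal A} {a : A} :
    a ∈ (I • (⊤ : Submodule A E)).annihilator ↔ ∀ b ∈ I, ∀ m : E, (a * b) • m = 0 := by
  rw [Submodule.mem_annihilator]
  constructor
  · intro h b hb m
    rw [mul_smul]
    exact h _ (Submodule.smul_mem_smul hb trivial)
  · intro h n hn
    refine Submodule.smul_induction_on hn (fun b hb m _ => ?_) (fun x y hx hy => ?_)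
    · rw [smul_smul]; exact h b hb m
    · rw [smul_add, hx, hy, add_zero]

private lemma mem_ann_span_smul_top {S : Set A} {a : A} :
    a ∈ (Ideal.span S • (⊤ : Submodule A E)).annihilator ↔
      ∀ b ∈ S, ∀ m : E, (a * b) • m = 0 := by
  rw [mem_ann_smul_top]
  constructor
  · exact fun h b hb => h b (Ideal.subset_span hb)
  · intro h b hb m
    have hle : Ideal.span S ≤
        Submodule.comap (LinearMap.mulLeft A a) (⊤ : Submodule A E).annihilator := by
      rw [Ideal.span_le]
      intro c hc
      simp only [SetLike.mem_coe, Submodule.mem_comap, LinearMap.mulLeft_apply,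
        Submodule.mem_annihilator]
      exact fun n _ => h c hc n
    have := hle hb
    simp only [Submodule.mem_comap, LinearMap.mulLeft_apply, Submodule.mem_annihilator] at this
    exact this m trivial

private lemma smul_eq_zero_of_coeffs (g : A[X]) (m : PolynomialModule A E)
    (h : ∀ i, ∀ x : E, g.coeff i • x = 0) : g • m = 0 := by
  refine PolynomialModule.ext (Finsupp.ext fun n => ?_)
  rw [PolynomialModule.smul_apply, PolynomialModule.coeff_zero, Finsupp.zero_apply]
  exact Finset.sum_eq_zero fun x _ => h x.1 (m.coeff x.2)

private lemma smul_eq_zero_of_forall (f : A[X]) (e : PolynomialModule A E)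
    (h : ∀ i j, f.coeff i • e.coeff j = 0) : f • e = 0 := by
  refine PolynomialModule.ext (Finsupp.ext fun n => ?_)
  rw [PolynomialModule.smul_apply, PolynomialModule.coeff_zero, Finsupp.zero_apply]
  exact Finset.sum_eq_zero fun x _ => h x.1 x.2

private lemma coeff_smul_of_smul_single (g : A[X]) (x : E)
    (h : g • (PolynomialModule.single A 0 x) = 0) : ∀ n, g.coeff n • x = 0 := by
  intro n
  have := congrArg (fun v : PolynomialModule A E => v.coeff n) h
  simpa [PolynomialModule.smul_single_apply] using this

end Aux

/-- An `A`-module `E` is an *annihilator multiplication module* if for every `e ∈ E`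
there exists a finitely generated ideal `I` of `A` such that `ann(e) = ann(IE)`. -/
def IsAnnMultiplication (A : Type*) [CommRing A] (E : Type*) [AddCommGroup E]
    [Module A E] : Prop :=
  ∀ e : E, ∃ I : Ideal A, I.FG ∧
    (Submodule.span A {e}).annihilator = (I • (⊤ : Submodule A E)).annihilator

/-- `E` is an *Armendariz module* if whenever `f(X) • e(X) = 0` in the polynomial
module `E[X]`, all products of coefficients `fᵢ • eⱼ` vanish. -/
def IsArmendariz (A : Type*) [CommRing A] (E : Type*) [AddCommGroup E]
    [Module A E] : Prop :=
  ∀ (f : Polynomial A) (e : PolynomialModule A E), f • e = 0 →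
    ∀ i j : ℕ, f.coeff i • e.coeff j = 0

/-- An Armendariz module `E` is an annihilator multiplication `A`-module iff the
polynomial module `E[X]` is an annihilator multiplication `A[X]`-module. -/
theorem isAnnMultiplication_polynomialModule_iff {A : Type*} [CommRing A] [Nontrivial A]
    {E : Type*} [AddCommGroup E] [Module A E] [Nontrivial E]
    (hArm : IsArmendariz A E) :
    IsAnnMultiplication A E ↔
      IsAnnMultiplication (Polynomial A) (PolynomialModule A E) := by
  classical
  constructor
  · -- forward direction
    intro hMul e
    choose Igen hIfg hIann using fun j : ℕ => hMul (e.coeff j)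
    choose T hT using hIfg
    set s : Finset ℕ := (show ℕ →₀ E from e.coeff).support with hs
    refine ⟨Ideal.span ((fun a => Polynomial.C a) '' ((s.biUnion T : Finset A) : Set A)),
      ⟨(s.biUnion T).image Polynomial.C, by rw [Finset.coe_image]⟩, ?_⟩
    have hchar : ∀ a : A,
        a ∈ (Ideal.span ((s.biUnion T : Finset A) : Set A) •
          (⊤ : Submodule A E)).annihilator ↔ ∀ j, a • e.coeff j = 0 := by
      intro a
      rw [mem_ann_span_smul_top]
      constructor
      · intro h j
        by_cases hj : e.coeff j = 0
        · rw [hj, smul_zero]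
        · have hjs : j ∈ s := Finsupp.mem_support_iff.mpr hj
          have hmem : a ∈ (Ideal.span ((T j : Finset A) : Set A) •
              (⊤ : Submodule A E)).annihilator := by
            rw [mem_ann_span_smul_top]
            intro b hb m
            exact h b (Finset.mem_coe.mpr (Finset.mem_biUnion.mpr ⟨j, hjs, hb⟩)) m
          rw [hT j, ← hIann j, Submodule.mem_annihilator_span_singleton] at hmem
          exact hmem
      · intro h b hb m
        rcases Finset.mem_biUnion.mp (Finset.mem_coe.mp hb) with ⟨j, hjs, hbj⟩
        have hmem : a ∈ (Igen j • (⊤ : Submodule A E)).annihilator := by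
          rw [← hIann j, Submodule.mem_annihilator_span_singleton]
          exact h j
        rw [← hT j, mem_ann_span_smul_top] at hmem
        exact hmem b hbj m
    ext f
    rw [Submodule.mem_annihilator_span_singleton, mem_ann_span_smul_top]
    constructor
    · intro hf
      have hij := hArm f e hf
      rintro g ⟨b, hb, rfl⟩ m
      refine smul_eq_zero_of_coeffs _ _ fun i x => ?_
      rw [coeff_mul_C]
      have hmem : f.coeff i ∈ (Ideal.span ((s.biUnion T : Finset A) : Set A) •
          (⊤ : Submodule A E)).annihilator := (hchar _).mpr fun j => hij i j
      rw [mem_ann_span_smul_top] at hmem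
      exact hmem b hb x
    · intro hf
      refine smul_eq_zero_of_forall f e fun i j => ?_
      have hmem : f.coeff i ∈ (Ideal.span ((s.biUnion T : Finset A) : Set A) •
          (⊤ : Submodule A E)).annihilator := by
        rw [mem_ann_span_smul_top]
        intro b hb x
        have h1 := hf (Polynomial.C b) ⟨b, hb, rfl⟩ (PolynomialModule.single A 0 x)
        have h2 := coeff_smul_of_smul_single _ x h1 i
        rwa [coeff_mul_C] at h2
      exact (hchar _).mp hmem j
  · -- backward direction
    intro hP e
    obtain ⟨J, hJfg, hJ⟩ := hP (PolynomialModule.single A 0 e)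
    obtain ⟨G, hG⟩ := hJfg
    refine ⟨Ideal.span ((G.biUnion fun g => g.coeffs : Finset A) : Set A), ⟨_, rfl⟩, ?_⟩
    ext a
    rw [Submodule.mem_annihilator_span_singleton, mem_ann_span_smul_top]
    have hsm : (Polynomial.C a) • PolynomialModule.single A 0 e
        = PolynomialModule.single A 0 (a • e) := by
      rw [← Polynomial.monomial_zero_left, PolynomialModule.monomial_smul_single]
    have key : a • e = 0 ↔ (Polynomial.C a) ∈
        (J • (⊤ : Submodule A[X] (PolynomialModule A E))).annihilator := by
      rw [← hJ, Submodule.mem_annihilator_span_singleton, hsm]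
      constructor
      · intro h
        rw [h]
        exact PolynomialModule.single_zero (R := A) 0
      · intro h
        have := congrArg (fun v : PolynomialModule A E => v.coeff 0) h
        simpa [PolynomialModule.coeff_single] using this
    rw [key, ← hG, mem_ann_span_smul_top]
    constructor
    · intro h b hb m
      rcases Finset.mem_biUnion.mp (Finset.mem_coe.mp hb) with ⟨g, hg, hbg⟩
      rcases Polynomial.mem_coeffs_iff.mp hbg with ⟨i, _, rfl⟩
      have h1 := h g (Finset.mem_coe.mpr hg) (PolynomialModule.single A 0 m)
      have h2 := coeff_smul_of_smul_single _ m h1 i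
      rwa [coeff_C_mul] at h2
    · intro h g hg m
      refine smul_eq_zero_of_coeffs _ _ fun i x => ?_
      rw [coeff_C_mul]
      by_cases hi : g.coeff i = 0
      · rw [hi, mul_zero, zero_smul]
      · have hig : g.coeff i ∈ g.coeffs :=
          Polynomial.mem_coeffs_iff.mpr ⟨i, Polynomial.mem_support_iff.mpr hi, rfl⟩
        exact h _ (Finset.mem_coe.mpr
          (Finset.mem_biUnion.mpr ⟨g, Finset.mem_coe.mp hg, hig⟩)) x
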